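/- Let A be a commutative ring in which the sum of any two radical ideals is a radical ideal. Then the lattice of radical ideals of A, ordered by inclusion, with join given by sum of ideals and meet given by intersection, is a distributive lattice. -/
import Mathlib


/-- If sums of radical ideals are radical, the lattice of radical ideals
(with join = sum and meet = intersection) is distributive. -/
theorem radical_ideals_distributive {A : Type*} [CommRing A]
    (hrad : ∀ I J : Ideal A, I.IsRadical → J.IsRadical → (I + J).IsRadical)
    (I J K : Ideal A) (hI : I.IsRadical) (hJ : J.IsRadical) (hK : K.IsRadical) :
    I ⊓ (J + K) = (I ⊓ J) + (I ⊓ K) := by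
  have hrhs : ((I ⊓ J) + (I ⊓ K)).IsRadical :=
    hrad _ _ (hI.inf hJ) (hI.inf hK)
  apply le_antisymm
  · intro x hx
    obtain ⟨hxI, hxJK⟩ := hx
    obtain ⟨j, hj, k, hk, hjk⟩ := Submodule.mem_sup.mp hxJK
    have hsq : x ^ 2 ∈ (I ⊓ J) + (I ⊓ K) := by
      have : x ^ 2 = x * j + x * k := by rw [← mul_add, hjk, sq]
      rw [this]
      exact Submodule.add_mem_sup ⟨Ideal.mul_mem_right _ _ hxI, Ideal.mul_mem_left _ _ hj⟩
        ⟨Ideal.mul_mem_right _ _ hxI, Ideal.mul_mem_left _ _ hk⟩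
    exact hrhs ⟨2, hsq⟩
  · exact sup_le (inf_le_inf_left _ le_sup_left) (inf_le_inf_left _ le_sup_right)
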